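/- Let (V, H) be a finite simplicial complex and suppose X ⊆ V is a transversal of the successive differences for a chain F_0 ⊂ F_1 ⊂ … ⊂ F_k of flats of (V, H), via an enumeration x_1, …, x_k of X with x_i ∈ F_i \ F_{i−1} for each i. Then {x_1, …, x_i} ∈ H for every i = 0, …, k; in particular X ∈ H. -/

import Mathlib

universe u v

/-- `F ⊆ V` is a flat of the simplicial complex `(V, H)`: for every `I ∈ H` with
`I ⊆ F` and every `p ∈ V \ F`, `I ∪ {p} ∈ H`. -/
def IsCFlat {α : Type u} (V : Set α) (H : Set (Set α)) (F : Set α) : Prop :=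
  F ⊆ V ∧ ∀ I ∈ H, I ⊆ F → ∀ p ∈ V \ F, insert p I ∈ H

/-- `(V, H)` is a finite simplicial complex: `V` is finite and nonempty, and
`H ⊆ 2^V` is nonempty and closed under taking subsets. -/
def IsCpx {α : Type u} (V : Set α) (H : Set (Set α)) : Prop :=
  V.Finite ∧ V.Nonempty ∧ H.Nonempty ∧ (∀ X ∈ H, X ⊆ V) ∧ ∀ X ∈ H, ∀ Y ⊆ X, Y ∈ H

/-- `X` is a transversal of the successive differences for some chain
`F 0 ⊂ F 1 ⊂ … ⊂ F k` of flats of `(V, H)`: `X` admits an enumeration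
`x 0, …, x (k-1)` with `x i ∈ F (i+1) \ F i`. -/
def TransvSD {α : Type u} (V : Set α) (H : Set (Set α)) (X : Set α) : Prop :=
  ∃ (k : ℕ) (F : Fin (k + 1) → Set α) (x : Fin k → α),
    (∀ i, IsCFlat V H (F i)) ∧ StrictMono F ∧
    Function.Injective x ∧ X = Set.range x ∧
    ∀ i : Fin k, x i ∈ F i.succ \ F i.castSucc

/-- `(V, H)` is boolean representable: every `X ∈ H` is a transversal of the
successive differences for some chain of flats of `(V, H)`. -/
def BoolRep {α : Type u} (V : Set α) (H : Set (Set α)) : Prop :=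
  ∀ X ∈ H, TransvSD V H X

/-- If `X` is a transversal of the successive differences for a chain
`F 0 ⊂ F 1 ⊂ … ⊂ F k` of flats of a finite simplicial complex `(V, H)`,
via an enumeration `x 0, …, x (k-1)` of `X` with `x i ∈ F (i+1) \ F i`, then
each initial segment `{x 0, …, x (i-1)}` belongs to `H`; in particular `X ∈ H`. -/
theorem stmt1 {α : Type u} (V : Set α) (H : Set (Set α)) (hC : IsCpx V H)
    (k : ℕ) (F : Fin (k + 1) → Set α) (x : Fin k → α)
    (hflat : ∀ i, IsCFlat V H (F i)) (hchain : StrictMono F)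
    (hinj : Function.Injective x) (X : Set α) (hX : X = Set.range x)
    (hx : ∀ i : Fin k, x i ∈ F i.succ \ F i.castSucc) :
    (∀ i : ℕ, i ≤ k → x '' {j : Fin k | (j : ℕ) < i} ∈ H) ∧ X ∈ H := by
  obtain ⟨hVfin, hVne, ⟨Y, hY⟩, hHV, hdown⟩ := hC
  have hempty : (∅ : Set α) ∈ H := hdown Y hY ∅ (Set.empty_subset Y)
  have main : ∀ i : ℕ, i ≤ k → x '' {j : Fin k | (j : ℕ) < i} ∈ H := by
    intro i
    induction i with
    | zero =>
      intro _
      have : {j : Fin k | (j : ℕ) < 0} = ∅ := by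
        ext j; simp
      rw [this, Set.image_empty]; exact hempty
    | succ i ih =>
      intro hik
      have hik' : i < k := hik
      have hset : {j : Fin k | (j : ℕ) < i + 1} =
          insert (⟨i, hik'⟩ : Fin k) {j : Fin k | (j : ℕ) < i} := by
        ext j
        simp [Nat.lt_succ_iff_lt_or_eq, Fin.ext_iff, or_comm] <;> omega
      rw [hset, Set.image_insert_eq]
      -- the flat F ⟨i, _⟩ in Fin (k+1)
      set Fi : Fin (k + 1) := ⟨i, Nat.lt_succ_of_lt hik'⟩ with hFi
      have hIsub : x '' {j : Fin k | (j : ℕ) < i} ⊆ F Fi := by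
        rintro _ ⟨j, hj, rfl⟩
        have h1 : x j ∈ F j.succ := (hx j).1
        have h2 : F j.succ ⊆ F Fi := by
          apply hchain.monotone
          simp only [Fin.le_def, Fin.val_succ]
          exact hj
        exact h2 h1
      have hcast : (⟨i, hik'⟩ : Fin k).castSucc = Fi := rfl
      have hxi : x ⟨i, hik'⟩ ∈ V \ F Fi := by
        refine ⟨(hflat _).1 (hx ⟨i, hik'⟩).1, ?_⟩
        have := (hx ⟨i, hik'⟩).2
        rwa [hcast] at this
      exact (hflat Fi).2 _ (ih (Nat.le_of_lt hik')) hIsub _ hxi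
  refine ⟨main, ?_⟩
  have : X = x '' {j : Fin k | (j : ℕ) < k} := by
    rw [hX]
    ext a
    constructor
    · rintro ⟨j, rfl⟩; exact ⟨j, j.isLt, rfl⟩
    · rintro ⟨j, _, rfl⟩; exact ⟨j, rfl⟩
  rw [this]
  exact main k le_rfl
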